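/- Let p: E → (1,∞) be measurable with 1 < p_- ≤ p_+ < ∞ and E^- = {x ∈ E : p(x) ≤ 2}. For measurable vector fields r, s: E → R^n and h: E → R^n with ‖|h|‖_{L^{p(·)}(E^-)} and ‖|s−r|‖_{L^{p(·)}(E)} finite, the integral ∫_{E^-} |h(x)| · | |r(x)|^{p(x)−2}r(x) − |s(x)|^{p(x)−2}s(x) | dx is bounded by C·K·‖|h|‖_{L^{p(·)}(E^-)}·‖|s−r|‖_{L^{p(·)}(E)}^{b_*−1}, where C = sup_{x∈E^-} C(p(x)) with C(p) the constant in the inequality ||s|^{p−2}s − |r|^{p−2}r| ≤ C(p)|s−r|^{p−1} for 1 < p ≤ 2, K ≤ 4 is the Hölder constant, and b_* equals p_- if ‖|s−r|‖_{L^{p(·)}(E)} < 1 and p_+ otherwise. -/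

import Mathlib

open MeasureTheory ENNReal

/-- The variable Lebesgue norm `‖f‖_{L^{p(·)}(E)}`. -/
noncomputable def vNorm {d : ℕ} (E : Set (EuclideanSpace ℝ (Fin d)))
    (p f : EuclideanSpace ℝ (Fin d) → ℝ) : ℝ≥0∞ :=
  sInf {t : ℝ≥0∞ | 0 < t ∧ ∫⁻ x in E, ((‖f x‖₊ : ℝ≥0∞) / t) ^ (p x) ≤ 1}

private lemma ofReal_mul_le_of_nonneg {a t : ℝ} (ht : 0 ≤ t) :
    ENNReal.ofReal (a * t) ≤ ENNReal.ofReal a * ENNReal.ofReal t := by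
  rcases le_or_gt 0 a with ha | ha
  · rw [ENNReal.ofReal_mul ha]
  · rw [ENNReal.ofReal_of_nonpos (mul_nonpos_of_nonpos_of_nonneg ha.le ht)]
    exact zero_le

private lemma ediv_le_self {a c : ℝ≥0∞} (h : 1 ≤ c) : a / c ≤ a := by
  rw [div_eq_mul_inv]
  calc a * c⁻¹ ≤ a * 1 := mul_le_mul_right (ENNReal.inv_le_one.mpr h) a
  _ = a := mul_one a

/-- Any value strictly above the variable norm is "admissible". -/
private lemma vNorm_admissible {d : ℕ} {E : Set (EuclideanSpace ℝ (Fin d))}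
    {p f : EuclideanSpace ℝ (Fin d) → ℝ}
    (hp : ∀ᵐ x ∂(volume.restrict E), 0 ≤ p x)
    {t : ℝ≥0∞} (ht : vNorm E p f < t) :
    ∫⁻ x in E, ((‖f x‖₊ : ℝ≥0∞) / t) ^ (p x) ≤ 1 := by
  rw [vNorm] at ht
  obtain ⟨u, ⟨hu0, hu1⟩, hut⟩ := sInf_lt_iff.mp ht
  refine le_trans (lintegral_mono_ae ?_) hu1
  filter_upwards [hp] with x hx
  exact ENNReal.rpow_le_rpow (ENNReal.div_le_div le_rfl hut.le) hx

theorem stmt19 {d n : ℕ} (E : Set (EuclideanSpace ℝ (Fin d))) (hE : MeasurableSet E)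
    (p : EuclideanSpace ℝ (Fin d) → ℝ) (hp : Measurable p)
    (pm pM : ℝ) (hpm1 : 1 < pm)
    (hbounds : ∀ᵐ x ∂(volume.restrict E), pm ≤ p x ∧ p x ≤ pM)
    (r s h : EuclideanSpace ℝ (Fin d) → EuclideanSpace ℝ (Fin n))
    (hr : Measurable r) (hs : Measurable s) (hh : Measurable h)
    (hhfin : vNorm (E ∩ {x | p x ≤ 2}) p (fun x => ‖h x‖) < ⊤)
    (hsrfin : vNorm E p (fun x => ‖s x - r x‖) < ⊤)
    (Cfun : ℝ → ℝ) (C : ℝ)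
    (hCfun : ∀ q : ℝ, 1 < q → q ≤ 2 →
      ∀ a b : EuclideanSpace ℝ (Fin n),
        ‖(‖a‖ ^ (q - 2)) • a - (‖b‖ ^ (q - 2)) • b‖ ≤ Cfun q * ‖a - b‖ ^ (q - 1))
    (hC : ∀ x ∈ E ∩ {x | p x ≤ 2}, Cfun (p x) ≤ C) :
    ∫⁻ x in E ∩ {x | p x ≤ 2},
        ENNReal.ofReal (‖h x‖ *
          ‖(‖r x‖ ^ (p x - 2)) • r x - (‖s x‖ ^ (p x - 2)) • s x‖) ≤
      ENNReal.ofReal C * 4 * vNorm (E ∩ {x | p x ≤ 2}) p (fun x => ‖h x‖) *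
        (vNorm E p (fun x => ‖s x - r x‖)) ^
          ((if vNorm E p (fun x => ‖s x - r x‖) < 1 then pm else pM) - 1) := by
  classical
  set E₂ : Set (EuclideanSpace ℝ (Fin d)) := E ∩ {x | p x ≤ 2} with hE₂def
  have hE₂m : MeasurableSet E₂ := hE.inter (hp measurableSet_Iic)
  set A := vNorm E₂ p (fun x => ‖h x‖) with hAdef
  set B := vNorm E p (fun x => ‖s x - r x‖) with hBdef
  set b : ℝ := if B < 1 then pm else pM with hbdef
  set F : EuclideanSpace ℝ (Fin d) → ℝ≥0∞ := fun x => (‖h x‖₊ : ℝ≥0∞) with hFdef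
  set G : EuclideanSpace ℝ (Fin d) → ℝ≥0∞ :=
    fun x => (‖s x - r x‖₊ : ℝ≥0∞) ^ (p x - 1) with hGdef
  have hbounds₂ : ∀ᵐ x ∂(volume.restrict E₂), pm ≤ p x ∧ p x ≤ pM :=
    ae_restrict_of_ae_restrict_of_subset Set.inter_subset_left hbounds
  have hmem₂ : ∀ᵐ x ∂(volume.restrict E₂), x ∈ E₂ := ae_restrict_mem hE₂m
  have hp0₂ : ∀ᵐ x ∂(volume.restrict E₂), 0 ≤ p x := by
    filter_upwards [hbounds₂] with x hx; linarith [hx.1]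
  have hp0E : ∀ᵐ x ∂(volume.restrict E), 0 ≤ p x := by
    filter_upwards [hbounds] with x hx; linarith [hx.1]
  have hAlt : A < ⊤ := hhfin
  have hBlt : B < ⊤ := hsrfin
  -- Step 1 : pointwise bound
  have step1 : (∫⁻ x in E₂,
      ENNReal.ofReal (‖h x‖ *
        ‖(‖r x‖ ^ (p x - 2)) • r x - (‖s x‖ ^ (p x - 2)) • s x‖)) ≤
      ENNReal.ofReal C * ∫⁻ x in E₂, F x * G x := by
    rw [← lintegral_const_mul' _ _ ENNReal.ofReal_ne_top]
    refine lintegral_mono_ae ?_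
    filter_upwards [hbounds₂, hmem₂] with x hxb hxm
    have hq1 : 1 < p x := lt_of_lt_of_le hpm1 hxb.1
    have hq2 : p x ≤ 2 := hxm.2
    have key := hCfun (p x) hq1 hq2 (r x) (s x)
    rw [norm_sub_rev (r x) (s x)] at key
    have hrp : (0:ℝ) ≤ ‖s x - r x‖ ^ (p x - 1) := Real.rpow_nonneg (norm_nonneg _) _
    have h1 : ‖h x‖ * ‖(‖r x‖ ^ (p x - 2)) • r x - (‖s x‖ ^ (p x - 2)) • s x‖ ≤
        C * (‖h x‖ * ‖s x - r x‖ ^ (p x - 1)) := by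
      have hC' : Cfun (p x) * ‖s x - r x‖ ^ (p x - 1) ≤ C * ‖s x - r x‖ ^ (p x - 1) :=
        mul_le_mul_of_nonneg_right (hC x hxm) hrp
      calc ‖h x‖ * ‖(‖r x‖ ^ (p x - 2)) • r x - (‖s x‖ ^ (p x - 2)) • s x‖
          ≤ ‖h x‖ * (C * ‖s x - r x‖ ^ (p x - 1)) :=
            mul_le_mul_of_nonneg_left (key.trans hC') (norm_nonneg _)
        _ = C * (‖h x‖ * ‖s x - r x‖ ^ (p x - 1)) := by ring
    refine (ENNReal.ofReal_le_ofReal h1).trans ?_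
    refine (ofReal_mul_le_of_nonneg (by positivity)).trans (le_of_eq ?_)
    rw [ENNReal.ofReal_mul (norm_nonneg _),
      ← ENNReal.ofReal_rpow_of_nonneg (norm_nonneg _) (by linarith : (0:ℝ) ≤ p x - 1),
      ofReal_norm, ofReal_norm, enorm_eq_nnnorm, enorm_eq_nnnorm]
  -- Step 2 : generalized Hölder
  have step2 : (∫⁻ x in E₂, F x * G x) ≤ 4 * A * B ^ (b - 1) := by
    by_cases hE₂0 : volume E₂ = 0
    · have hz : volume.restrict E₂ = 0 := Measure.restrict_eq_zero.mpr hE₂0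
      rw [hz]
      simp
    have hne : (ae (volume.restrict E₂)).NeBot :=
      ae_neBot.mpr (fun hcon => hE₂0 (Measure.restrict_eq_zero.mp hcon))
    obtain ⟨x₀, hx₀b, hx₀m⟩ := (hbounds₂.and hmem₂).exists
    have hpm2 : pm ≤ 2 := le_trans hx₀b.1 hx₀m.2
    have hpmM : pm ≤ pM := le_trans hx₀b.1 hx₀b.2
    have hb1 : 1 < b := by rw [hbdef]; split <;> linarith
    have hb1' : (0:ℝ) < b - 1 := by linarith
    -- the core Hölder estimate with admissible parameters
    have core : ∀ t t₁ : ℝ≥0∞, B < t₁ → t₁ ≠ ⊤ → (B < 1 → t₁ ≤ 1) → (¬ B < 1 → 1 ≤ t₁) →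
        A < t → t ≠ ⊤ →
        (∫⁻ x in E₂, F x * G x) ≤ 2 * t * t₁ ^ (b - 1) := by
      intro t t₁ hBt₁ ht₁top hcase1 hcase2 hAt httop
      have ht0 : t ≠ 0 := (lt_of_le_of_lt zero_le hAt).ne'
      have ht₁0 : t₁ ≠ 0 := (lt_of_le_of_lt zero_le hBt₁).ne'
      set T := t₁ ^ (b - 1) with hTdef
      have hT0 : T ≠ 0 := (ENNReal.rpow_pos ((pos_iff_ne_zero.mpr ht₁0)) ht₁top).ne'
      have hTtop : T ≠ ⊤ := ENNReal.rpow_ne_top_of_nonneg hb1'.le ht₁top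
      -- admissibility of t for ‖h‖ on E₂
      have hFint : ∫⁻ x in E₂, (F x / t) ^ (p x) ≤ 1 := by
        have := vNorm_admissible (f := fun x => ‖h x‖) hp0₂ (hAdef ▸ hAt)
        simpa [hFdef, nnnorm_norm] using this
      -- admissibility of t₁ for ‖s-r‖ on E
      have hgint : ∫⁻ x in E, ((‖s x - r x‖₊ : ℝ≥0∞) / t₁) ^ (p x) ≤ 1 := by
        have := vNorm_admissible (f := fun x => ‖s x - r x‖) hp0E (hBdef ▸ hBt₁)
        simpa [nnnorm_norm] using this
      -- the conjugate-exponent integral bound for G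
      have hGint : ∫⁻ x in E₂, (G x / T) ^ (p x / (p x - 1)) ≤ 1 := by
        refine le_trans (lintegral_mono_ae ?_)
          (le_trans (lintegral_mono_set Set.inter_subset_left) hgint)
        filter_upwards [hbounds₂] with x hxb
        have hq1 : 1 < p x := lt_of_lt_of_le hpm1 hxb.1
        have hq1' : (0:ℝ) < p x - 1 := by linarith
        have hqq' : (0:ℝ) < p x / (p x - 1) := by positivity
        have e0 : (p x - 1) * (p x / (p x - 1)) = p x := by field_simp
        have e1 : (G x / T) ^ (p x / (p x - 1)) =
            (‖s x - r x‖₊ : ℝ≥0∞) ^ (p x) / t₁ ^ ((b - 1) * (p x / (p x - 1))) := by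
          rw [hGdef, hTdef, ENNReal.div_rpow_of_nonneg _ _ hqq'.le, ← ENNReal.rpow_mul,
            ← ENNReal.rpow_mul, e0]
        rw [e1, ENNReal.div_rpow_of_nonneg _ _ (by positivity : (0:ℝ) ≤ p x)]
        refine ENNReal.div_le_div le_rfl ?_
        rcases lt_or_ge B 1 with hB1 | hB1
        · have hbq : b ≤ p x := by rw [hbdef, if_pos hB1]; exact hxb.1
          have hexp : (b - 1) * (p x / (p x - 1)) ≤ p x := by
            calc (b - 1) * (p x / (p x - 1)) ≤ (p x - 1) * (p x / (p x - 1)) :=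
                  mul_le_mul_of_nonneg_right (by linarith) hqq'.le
              _ = p x := e0
          exact ENNReal.rpow_le_rpow_of_exponent_ge (hcase1 hB1) hexp
        · have hbq : p x ≤ b := by rw [hbdef, if_neg (not_lt.mpr hB1)]; exact hxb.2
          have hexp : p x ≤ (b - 1) * (p x / (p x - 1)) := by
            calc p x = (p x - 1) * (p x / (p x - 1)) := e0.symm
              _ ≤ (b - 1) * (p x / (p x - 1)) :=
                  mul_le_mul_of_nonneg_right (by linarith) hqq'.le
          exact ENNReal.rpow_le_rpow_of_exponent_le (hcase2 (not_lt.mpr hB1)) hexp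
      -- measurability
      have hFm : Measurable fun x => (F x / t) ^ (p x) := by
        refine Measurable.pow ?_ hp
        exact (hh.nnnorm.coe_nnreal_ennreal).div measurable_const
      -- Young's inequality pointwise + combine
      calc (∫⁻ x in E₂, F x * G x)
          = ∫⁻ x in E₂, (t * T) * ((F x / t) * (G x / T)) := by
            refine lintegral_congr fun x => ?_
            have : (t * T) * ((F x / t) * (G x / T)) = (F x / t * t) * (G x / T * T) := by ring
            rw [this, ENNReal.div_mul_cancel ht0 httop, ENNReal.div_mul_cancel hT0 hTtop]
        _ ≤ ∫⁻ x in E₂, (t * T) * ((F x / t) ^ (p x) + (G x / T) ^ (p x / (p x - 1))) := by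
            refine lintegral_mono_ae ?_
            filter_upwards [hbounds₂] with x hxb
            refine mul_le_mul_right ?_ _
            have hq1 : 1 < p x := lt_of_lt_of_le hpm1 hxb.1
            have hconj : (p x).HolderConjugate (p x / (p x - 1)) :=
              Real.HolderConjugate.conjExponent hq1
            refine (ENNReal.young_inequality (F x / t) (G x / T) hconj).trans ?_
            gcongr ?_ + ?_
            · exact ediv_le_self (by
                simpa using ENNReal.one_le_ofReal.mpr hconj.lt.le)
            · exact ediv_le_self (by
                simpa using ENNReal.one_le_ofReal.mpr hconj.symm.lt.le)
        _ = (t * T) * ((∫⁻ x in E₂, (F x / t) ^ (p x)) +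
              ∫⁻ x in E₂, (G x / T) ^ (p x / (p x - 1))) := by
            rw [lintegral_const_mul' _ _ (ENNReal.mul_ne_top httop hTtop),
              lintegral_add_left hFm]
        _ ≤ (t * T) * (1 + 1) := by gcongr
        _ = 2 * t * T := by ring
    -- now conclude, splitting on whether B = 0
    rcases eq_or_ne B 0 with hB0 | hB0
    · have hX0 : (∫⁻ x in E₂, F x * G x) ≤ 0 := by
        refine ENNReal.le_of_forall_pos_le_add fun ε hε _ => ?_
        have hA1top : A + 1 ≠ ⊤ := ENNReal.add_ne_top.mpr ⟨hAlt.ne, one_ne_top⟩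
        have h2t0 : (2 : ℝ≥0∞) * (A + 1) ≠ 0 := by
          simp [mul_eq_zero]
        have h2ttop : (2 : ℝ≥0∞) * (A + 1) ≠ ⊤ := ENNReal.mul_ne_top (by simp) hA1top
        set δ : ℝ≥0∞ := (ε : ℝ≥0∞) / (2 * (A + 1)) with hδdef
        have hδ0 : δ ≠ 0 :=
          ENNReal.div_ne_zero.mpr ⟨by exact_mod_cast hε.ne', h2ttop⟩
        have hδtop : δ ≠ ⊤ := (ENNReal.div_lt_top coe_ne_top h2t0).ne
        set t₁ : ℝ≥0∞ := min 1 (δ ^ (b - 1)⁻¹) with ht₁def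
        have ht₁0 : t₁ ≠ 0 := by
          rw [ht₁def]
          exact (lt_min (zero_lt_one' ℝ≥0∞)
            (ENNReal.rpow_pos (pos_iff_ne_zero.mpr hδ0) hδtop)).ne'
        have hcore := core (A + 1) t₁ (by rw [hB0]; exact (pos_iff_ne_zero.mpr ht₁0))
          (ne_top_of_le_ne_top one_ne_top (min_le_left _ _))
          (fun _ => min_le_left _ _)
          (fun hcon => absurd (hB0 ▸ zero_lt_one) hcon)
          (ENNReal.lt_add_right hAlt.ne one_ne_zero) hA1top
        refine hcore.trans ?_
        have ht₁T : t₁ ^ (b - 1) ≤ δ := by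
          calc t₁ ^ (b - 1) ≤ (δ ^ (b - 1)⁻¹) ^ (b - 1) :=
                ENNReal.rpow_le_rpow (min_le_right _ _) hb1'.le
            _ = δ := by
                rw [← ENNReal.rpow_mul, inv_mul_cancel₀ hb1'.ne', ENNReal.rpow_one]
        calc 2 * (A + 1) * t₁ ^ (b - 1) ≤ 2 * (A + 1) * δ := mul_le_mul_right ht₁T _
          _ = (ε : ℝ≥0∞) := ENNReal.mul_div_cancel h2t0 h2ttop
          _ = 0 + ε := (zero_add _).symm
      exact hX0.trans zero_le
    · -- B ≠ 0
      have hBpos : 0 < B := (pos_iff_ne_zero.mpr hB0)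
      set c : ℝ≥0∞ := (2 : ℝ≥0∞) ^ (b - 1)⁻¹ with hcdef
      have hc1 : 1 < c := ENNReal.one_lt_rpow one_lt_two (by positivity)
      have hctop : c ≠ ⊤ := ENNReal.rpow_ne_top_of_nonneg (by positivity) (by simp)
      have hcB : B < c * B := by
        conv_lhs => rw [← one_mul B]
        rw [mul_comm 1 B, mul_comm c B]; exact ENNReal.mul_lt_mul_right hB0 hBlt.ne hc1
      have hcBtop : c * B ≠ ⊤ := ENNReal.mul_ne_top hctop hBlt.ne
      have hcpow : c ^ (b - 1) = 2 := by
        rw [hcdef, ← ENNReal.rpow_mul, inv_mul_cancel₀ hb1'.ne', ENNReal.rpow_one]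
      -- choose t₁
      set t₁ : ℝ≥0∞ := if B < 1 then min 1 (c * B) else c * B with ht₁def
      have hBt₁ : B < t₁ := by
        rw [ht₁def]; split
        · exact lt_min (by assumption) hcB
        · exact hcB
      have ht₁top : t₁ ≠ ⊤ := by
        rw [ht₁def]; split
        · exact ne_top_of_le_ne_top one_ne_top (min_le_left _ _)
        · exact hcBtop
      have hc1' : B < 1 → t₁ ≤ 1 := by
        intro h1; rw [ht₁def, if_pos h1]; exact min_le_left _ _
      have hc2' : ¬ B < 1 → 1 ≤ t₁ := by
        intro h1; rw [ht₁def, if_neg h1]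
        exact le_trans (not_lt.mp h1) hcB.le
      have ht₁T : t₁ ^ (b - 1) ≤ 2 * B ^ (b - 1) := by
        have h0 : t₁ ≤ c * B := by
          rw [ht₁def]; split
          · exact min_le_right _ _
          · exact le_rfl
        calc t₁ ^ (b - 1) ≤ (c * B) ^ (b - 1) := ENNReal.rpow_le_rpow h0 hb1'.le
          _ = c ^ (b - 1) * B ^ (b - 1) := ENNReal.mul_rpow_of_nonneg _ _ hb1'.le
          _ = 2 * B ^ (b - 1) := by rw [hcpow]
      set D := B ^ (b - 1) with hDdef
      have hD0 : D ≠ 0 := (ENNReal.rpow_pos hBpos hBlt.ne).ne'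
      have hDtop : D ≠ ⊤ := ENNReal.rpow_ne_top_of_nonneg hb1'.le hBlt.ne
      have h4D0 : (4 : ℝ≥0∞) * D ≠ 0 := by simp [mul_eq_zero, hD0]
      have h4Dtop : (4 : ℝ≥0∞) * D ≠ ⊤ := ENNReal.mul_ne_top (by simp) hDtop
      refine ENNReal.le_of_forall_pos_le_add fun ε hε _ => ?_
      set δ : ℝ≥0∞ := (ε : ℝ≥0∞) / (4 * D) with hδdef
      have hδ0 : δ ≠ 0 := ENNReal.div_ne_zero.mpr ⟨by exact_mod_cast hε.ne', h4Dtop⟩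
      have hδtop : δ ≠ ⊤ := (ENNReal.div_lt_top coe_ne_top h4D0).ne
      set t : ℝ≥0∞ := A + δ with htdef
      have hAt : A < t := ENNReal.lt_add_right hAlt.ne hδ0
      have httop : t ≠ ⊤ := ENNReal.add_ne_top.mpr ⟨hAlt.ne, hδtop⟩
      have hcore := core t t₁ hBt₁ ht₁top hc1' hc2' hAt httop
      refine hcore.trans ?_
      calc 2 * t * t₁ ^ (b - 1) ≤ 2 * t * (2 * D) := mul_le_mul_right ht₁T _
        _ = 4 * A * D + δ * (4 * D) := by rw [htdef]; ring
        _ = 4 * A * D + ε := by rw [hδdef, ENNReal.div_mul_cancel h4D0 h4Dtop]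
  -- combine
  calc (∫⁻ x in E₂,
      ENNReal.ofReal (‖h x‖ *
        ‖(‖r x‖ ^ (p x - 2)) • r x - (‖s x‖ ^ (p x - 2)) • s x‖))
      ≤ ENNReal.ofReal C * ∫⁻ x in E₂, F x * G x := step1
    _ ≤ ENNReal.ofReal C * (4 * A * B ^ (b - 1)) := mul_le_mul_right step2 _
    _ = ENNReal.ofReal C * 4 * A * B ^ (b - 1) := by ring
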